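/- Let k ⊆ so(V) be a Lie subalgebra, h ⊆ V a k-invariant irreducible subspace with k ∩ so(h) ≠ 0 (where so(h) ⊆ so(V) consists of skew endomorphisms vanishing on h^⊥). Then the k-representation h ⊗ Λ²(h^⊥) has no nonzero invariant vectors. -/

import Mathlib

open scoped RealInnerProductSpace

attribute [local instance 100] LieRing.ofAssociativeRing

/-- Let `k ⊆ so(V)` be a Lie subalgebra, `h` a `k`-invariant irreducible
subspace with `k ∩ so(h) ≠ 0`. Then the `k`-representation `h ⊗ Λ²(hᗮ)` has no nonzero
invariant vectors.  An element of `h ⊗ Λ²(hᗮ)` is encoded as an alternating bilinear map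
`u` on `hᗮ` with values in `h`; invariance means `A (u x y) - u (A x) y - u x (A y) = 0`
for all `A ∈ k` and `x, y ∈ hᗮ`, and the conclusion is `u x y = 0` on `hᗮ`. -/
theorem stmt2 {V : Type*} [NormedAddCommGroup V] [InnerProductSpace ℝ V]
    [FiniteDimensional ℝ V]
    (k : LieSubalgebra ℝ (Module.End ℝ V))
    (hskewadj : ∀ A ∈ k, ∀ x y : V, ⟪A x, y⟫ = - ⟪x, A y⟫)
    (h : Submodule ℝ V)
    (hinv : ∀ A ∈ k, ∀ v ∈ h, A v ∈ h)
    (hirr : ∀ W : Submodule ℝ V, W ≤ h → (∀ A ∈ k, ∀ v ∈ W, A v ∈ W) → W = ⊥ ∨ W = h)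
    (hkh : ∃ A ∈ k, (∀ w ∈ hᗮ, A w = 0) ∧ A ≠ 0)
    (u : V →ₗ[ℝ] V →ₗ[ℝ] V)
    (halt : ∀ x y : V, u x y = - u y x)
    (hval : ∀ x ∈ hᗮ, ∀ y ∈ hᗮ, u x y ∈ h)
    (huinv : ∀ A ∈ k, ∀ x ∈ hᗮ, ∀ y ∈ hᗮ, A (u x y) - u (A x) y - u x (A y) = 0) :
    ∀ x ∈ hᗮ, ∀ y ∈ hᗮ, u x y = 0 := by
  -- hᗮ is k-invariant
  have hinvperp : ∀ A ∈ k, ∀ w ∈ hᗮ, A w ∈ hᗮ := by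
    intro A hA w hw
    rw [Submodule.mem_orthogonal]
    intro v hv
    have h1 : ⟪A v, w⟫ = 0 := hw (A v) (hinv A hA v hv)
    have h2 := hskewadj A hA v w
    linarith [h2, h1]
  -- the submodule of h annihilated by all of k_h
  let W : Submodule ℝ V :=
  { carrier := {v | v ∈ h ∧ ∀ A ∈ k, (∀ w ∈ hᗮ, A w = 0) → A v = 0}
    add_mem' := by
      rintro a b ⟨ha1, ha2⟩ ⟨hb1, hb2⟩
      exact ⟨h.add_mem ha1 hb1, fun A hA hA0 => by
        simp [map_add, ha2 A hA hA0, hb2 A hA hA0]⟩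
    zero_mem' := ⟨h.zero_mem, fun A _ _ => map_zero A⟩
    smul_mem' := by
      rintro c a ⟨ha1, ha2⟩
      exact ⟨h.smul_mem c ha1, fun A hA hA0 => by
        simp [map_smul, ha2 A hA hA0]⟩ }
  have hWle : W ≤ h := fun v hv => hv.1
  have hWinv : ∀ B ∈ k, ∀ v ∈ W, B v ∈ W := by
    intro B hB v hv
    obtain ⟨hv1, hv2⟩ := hv
    refine ⟨hinv B hB v hv1, ?_⟩
    intro A hA hA0
    have hbr : ⁅A, B⁆ ∈ k := k.lie_mem hA hB
    have hbr0 : ∀ w ∈ hᗮ, ⁅A, B⁆ w = 0 := by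
      intro w hw
      have : ⁅A, B⁆ w = A (B w) - B (A w) := rfl
      rw [this, hA0 (B w) (hinvperp B hB w hw), hA0 w hw, map_zero, sub_zero]
    have h1 : ⁅A, B⁆ v = 0 := hv2 ⁅A, B⁆ hbr hbr0
    have h2 : A (B v) - B (A v) = 0 := h1
    have h3 : A v = 0 := hv2 A hA hA0
    rw [h3, map_zero, sub_zero] at h2
    exact h2
  rcases hirr W hWle hWinv with hW | hW
  · -- W = ⊥ : show u x y ∈ W
    intro x hx y hy
    have : u x y ∈ W := by
      refine ⟨hval x hx y hy, ?_⟩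
      intro A hA hA0
      have := huinv A hA x hx y hy
      rw [hA0 x hx, hA0 y hy] at this
      simpa using this
    rw [hW] at this
    simpa using this
  · -- W = h : contradiction with A ≠ 0
    exfalso
    obtain ⟨A, hA, hA0, hAne⟩ := hkh
    apply hAne
    ext v
    obtain ⟨p, hp, q, hq, rfl⟩ : ∃ p ∈ h, ∃ q ∈ hᗮ, v = p + q := by
      have := Submodule.exists_add_mem_mem_orthogonal (K := h) v
      tauto
    have hpW : p ∈ W := hW ▸ hp
    have h1 : A p = 0 := hpW.2 A hA hA0
    simp [map_add, h1, hA0 q hq]
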